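/- Let X be a real normed vector space, E : X → ℝ continuous, and u₀, u₁ ∈ X with E(u₁) ≤ E(u₀). Let Γ be the set of continuous paths g : [0,1] → X with g(0) = u₀ and g(1) = u₁, and let c = inf_{g ∈ Γ} sup_{t ∈ [0,1]} E(g(t)). If c > E(u₀), then u₀ and u₁ lie in two distinct connected components of the set {u ∈ X : E(u) < c}. -/

import Mathlib

open Set

/-- Mountain-pass level separation: if `E : X → ℝ` is continuous, `E u₁ ≤ E u₀`, and the
mountain-pass level `c` (the infimum over continuous paths from `u₀` to `u₁` of the
supremum of `E` along the path) satisfies `c > E u₀`, then `u₀` and `u₁` lie in two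
distinct connected components of the sublevel set `{u : E u < c}`. -/
theorem stmt_3 {X : Type*} [NormedAddCommGroup X] [NormedSpace ℝ X]
    (E : X → ℝ) (hE : Continuous E) (u₀ u₁ : X) (h01 : E u₁ ≤ E u₀)
    (c : ℝ)
    (hc : c = sInf { y : ℝ | ∃ g : ℝ → X, ContinuousOn g (Set.Icc 0 1) ∧
        g 0 = u₀ ∧ g 1 = u₁ ∧ y = sSup ((fun t => E (g t)) '' Set.Icc 0 1) })
    (hgt : E u₀ < c) :
    u₀ ∈ {u : X | E u < c} ∧ u₁ ∈ {u : X | E u < c} ∧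
      connectedComponentIn {u : X | E u < c} u₀ ≠
        connectedComponentIn {u : X | E u < c} u₁ := by
  set S : Set X := {u : X | E u < c} with hS
  have hSopen : IsOpen S := isOpen_lt hE continuous_const
  have hu0 : u₀ ∈ S := hgt
  have hu1 : u₁ ∈ S := lt_of_le_of_lt h01 hgt
  refine ⟨hu0, hu1, ?_⟩
  intro heq
  -- u₁ lies in the connected component of u₀ in S
  have hmem : u₁ ∈ connectedComponentIn S u₀ := by
    rw [heq]; exact mem_connectedComponentIn hu1
  -- that component is open and connected, hence path-connected
  have hopen : IsOpen (connectedComponentIn S u₀) := hSopen.connectedComponentIn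
  have hconn : IsConnected (connectedComponentIn S u₀) :=
    isConnected_connectedComponentIn_iff.mpr hu0
  have hpath : IsPathConnected (connectedComponentIn S u₀) :=
    hopen.isConnected_iff_isPathConnected.mp hconn
  obtain ⟨γ, hγ⟩ := hpath.joinedIn u₀ (mem_connectedComponentIn hu0) u₁ hmem
  have hγS : ∀ t : unitInterval, γ t ∈ S :=
    fun t => connectedComponentIn_subset S u₀ (hγ t)
  -- use γ.extend as a competitor path
  set g : ℝ → X := ⇑γ.extend with hg
  have hgc : Continuous g := γ.continuous_extend
  have himg : IsCompact ((fun t => E (g t)) '' Set.Icc 0 1) :=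
    (isCompact_Icc).image (hE.comp hgc)
  have hne : ((fun t => E (g t)) '' Set.Icc 0 1).Nonempty :=
    ⟨E (g 0), ⟨0, by simp, rfl⟩⟩
  set y : ℝ := sSup ((fun t => E (g t)) '' Set.Icc 0 1) with hy
  have hymem : y ∈ (fun t => E (g t)) '' Set.Icc 0 1 := himg.sSup_mem hne
  obtain ⟨t, ht, hyt⟩ := hymem
  have hyc : y < c := by
    rw [← hyt]
    have : g t ∈ S := by
      rw [hg, γ.extend_extends' ⟨t, ht⟩]
      exact hγS _
    exact this
  -- the infimum c is at most y
  have hbdd : BddBelow { y : ℝ | ∃ g : ℝ → X, ContinuousOn g (Set.Icc 0 1) ∧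
      g 0 = u₀ ∧ g 1 = u₁ ∧ y = sSup ((fun t => E (g t)) '' Set.Icc 0 1) } := by
    refine ⟨min (E u₀) 0, ?_⟩
    rintro y' ⟨g', hg', h0', h1', rfl⟩
    by_cases hb : BddAbove ((fun t => E (g' t)) '' Set.Icc 0 1)
    · refine le_trans (min_le_left _ _) (le_csSup hb ⟨0, by simp, by simp [h0']⟩)
    · rw [Real.sSup_of_not_bddAbove hb]
      exact min_le_right _ _
  have hcy : c ≤ y := by
    rw [hc]
    exact csInf_le hbdd ⟨g, hgc.continuousOn, by simp [hg], by simp [hg], rfl⟩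
  exact absurd hcy (not_le.mpr hyc)
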